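/- Let 0 < λ2 ≤ λ1, set p1* = 1, p2* = (λ2/λ1)², and let π = (π00, π10, π01, π11) be any row vector with nonnegative entries summing to 1 satisfying π·Q(p1*,p2*) = 0. Then the fairness constraint R1_in = R1_out holds: the rate a1 = π01·p1*·λ2 at which node 1 executes tasks from node 2 equals the rate a2 = π10·p2*·λ1 at which node 2 executes tasks from node 1, i.e. π01·λ2 = π10·(λ2/λ1)²·λ1. -/

import Mathlib

/-- Infinitesimal generator of the two-node cooperation CTMC,
states ordered 00, 10, 01, 11. -/
noncomputable def genQ (l1 l2 p1 p2 : ℝ) : Matrix (Fin 4) (Fin 4) ℝ :=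
  !![-l1-l2, l1, l2, 0;
     1, -1-p2*l1-l2, 0, l2+p2*l1;
     1, 0, -1-p1*l2-l1, l1+p1*l2;
     0, 1, 1, -2]

theorem fairness_at_opt (l1 l2 : ℝ) (hl2 : 0 < l2) (hl : l2 ≤ l1)
    (π : Fin 4 → ℝ) (hnn : ∀ i, 0 ≤ π i) (hsum : ∑ i, π i = 1)
    (hstat : Matrix.vecMul π (genQ l1 l2 1 ((l2/l1)^2)) = 0) :
    π 2 * 1 * l2 = π 1 * ((l2/l1)^2) * l1 := by
  have hl1 : 0 < l1 := lt_of_lt_of_le hl2 hl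
  have hs : 0 < (l1 + l2)^2 + 2*l1 := by positivity
  have e0 := congrFun hstat 0
  have e1 := congrFun hstat 1
  have e2 := congrFun hstat 2
  simp [genQ, Matrix.vecMul, dotProduct, Fin.sum_univ_four] at e0 e1 e2
  have hl1' : l1 ≠ 0 := ne_of_gt hl1
  have hsum' : l1 + l2 ≠ 0 := by positivity
  have hs' : (l1 + l2)^2 + 2*l1 ≠ 0 := ne_of_gt hs
  field_simp
  linear_combination (norm := (field_simp; ring)) (-(l1*(l2-l1))/((l1+l2)^2+2*l1) * e0
    + (l1*(l1+l2))/((l1+l2)^2+2*l1) * e1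
    - (l1*(l1+l2))/((l1+l2)^2+2*l1) * e2)
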